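/- arXiv:1003.4127 — 3 statements merged into one kernel-verified Lean document; each statement's English description precedes it below -/
import Mathlib

section
/- Let d ≥ 1, let ε, τ, Δt > 0, ν < 1, ρ > 0, T ∈ ℝ, u ∈ ℝ^d, and let V, Σ be d×d real matrices. Define Θ by ρ·Θ = Σ − ρ·(u ⊗ u) and 𝒯 = (1−ν)·T·I + ν·Θ, where I is the d×d identity matrix and u ⊗ u is the matrix with entries u_i u_j. If Σ = (ε/(ε+τΔt))·V + (τΔt/(ε+τΔt))·ρ·(𝒯 + u ⊗ u), then Σ = (ε/(ε+(1−ν)τΔt))·V + ((1−ν)τΔt/(ε+(1−ν)τΔt))·ρ·(T·I + u ⊗ u). (This resolves the implicit second-moment equation of the IMEX scheme for the ES-BGK model explicitly, equation (AP-111) of the paper.) -/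
open Matrix

/-- Explicit resolution of the implicit second-moment equation (AP-111) of the
IMEX scheme for the ES-BGK model. -/
theorem stmt_2 {d : ℕ} (hd : 1 ≤ d) (ε τ Δt ν ρ T : ℝ)
    (hε : 0 < ε) (hτ : 0 < τ) (hΔt : 0 < Δt) (hν : ν < 1) (hρ : 0 < ρ)
    (u : Fin d → ℝ) (V S Θ 𝒯 : Matrix (Fin d) (Fin d) ℝ)
    (hΘ : ρ • Θ = S - ρ • vecMulVec u u)
    (h𝒯 : 𝒯 = ((1 - ν) * T) • (1 : Matrix (Fin d) (Fin d) ℝ) + ν • Θ)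
    (hS : S = (ε / (ε + τ * Δt)) • V
        + (τ * Δt / (ε + τ * Δt)) • (ρ • (𝒯 + vecMulVec u u))) :
    S = (ε / (ε + (1 - ν) * τ * Δt)) • V
        + ((1 - ν) * τ * Δt / (ε + (1 - ν) * τ * Δt)) •
          (ρ • (T • (1 : Matrix (Fin d) (Fin d) ℝ) + vecMulVec u u)) := by
  have hA : (0:ℝ) < ε + τ * Δt := by positivity
  have hB : (0:ℝ) < ε + (1 - ν) * τ * Δt := by
    have : 0 < (1 - ν) * τ * Δt := by
      have h1 : 0 < 1 - ν := by linarith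
      positivity
    linarith
  ext i j
  have hΘij := congrFun (congrFun hΘ i) j
  have h𝒯ij := congrFun (congrFun h𝒯 i) j
  have hSij := congrFun (congrFun hS i) j
  simp only [Matrix.add_apply, Matrix.sub_apply, Matrix.smul_apply, smul_eq_mul,
    vecMulVec_apply] at hΘij h𝒯ij hSij ⊢
  field_simp at hSij
  rw [div_mul_eq_mul_div, div_mul_eq_mul_div, ← add_div, eq_div_iff hB.ne']
  linear_combination hSij + τ * Δt * ρ * h𝒯ij + τ * Δt * ν * hΘij
end

section
/- Let Θ be a real symmetric positive definite 3×3 matrix, let T = trace(Θ)/3, and let ν ∈ [−1/2, 1). Then the matrix 𝒯 = (1−ν)·T·I + ν·Θ is symmetric positive definite. (This guarantees that the corrected tensor of the ES-BGK model defines a genuine Gaussian distribution for all admissible Prandtl parameters ν ∈ [−1/2, 1).) -/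
open Matrix

/-- Conjugating a positive definite matrix by an invertible matrix preserves
positive definiteness. -/
lemma posDef_mul_mul_conjTranspose_aux {n : Type*} [Fintype n] [DecidableEq n]
    {A : Matrix n n ℝ} (hA : A.PosDef) {B : Matrix n n ℝ} (hB : IsUnit B) :
    (B * A * Bᴴ).PosDef := by
  refine Matrix.PosDef.of_dotProduct_mulVec_pos ?_ ?_
  · exact (hA.posSemidef.mul_mul_conjTranspose_same B).1
  · intro x hx
    have hBH : IsUnit Bᴴ := by
      rw [Matrix.isUnit_iff_isUnit_det, Matrix.det_conjTranspose]
      exact ((Matrix.isUnit_iff_isUnit_det _).1 hB).star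
    have hx' : Bᴴ *ᵥ x ≠ 0 := by
      intro h
      exact hx (((Matrix.mulVec_injective_iff_isUnit).2 hBH)
        (by simpa using h : Bᴴ *ᵥ x = Bᴴ *ᵥ 0))
    have := hA.dotProduct_mulVec_pos hx'
    simpa only [star_mulVec, dotProduct_mulVec, vecMul_vecMul,
      conjTranspose_conjTranspose] using this

/-- For every admissible Prandtl parameter `ν ∈ [−1/2, 1)`, the corrected
tensor `𝒯 = (1−ν)T·I + νΘ` of the ES-BGK model (with `T = trace(Θ)/3`) is
symmetric positive definite. -/
theorem stmt_8 (Θ : Matrix (Fin 3) (Fin 3) ℝ) (hΘ : Θ.PosDef)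
    (T ν : ℝ) (hT : T = Θ.trace / 3) (hν₁ : -(1/2 : ℝ) ≤ ν) (hν₂ : ν < 1) :
    (((1 - ν) * T) • (1 : Matrix (Fin 3) (Fin 3) ℝ) + ν • Θ).PosDef := by
  classical
  have hH : Θ.IsHermitian := hΘ.1
  set lam := hH.eigenvalues with hlam
  have hev : ∀ i, 0 < lam i := hΘ.eigenvalues_pos
  set U : Matrix (Fin 3) (Fin 3) ℝ := (hH.eigenvectorUnitary : Matrix (Fin 3) (Fin 3) ℝ)
    with hU
  have hUU : U * star U = 1 := hH.eigenvectorUnitary.2.2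
  have hUU' : star U * U = 1 := hH.eigenvectorUnitary.2.1
  have hUunit : IsUnit U := by
    have hdet : U.det * (star U).det = 1 := by
      rw [← Matrix.det_mul, hUU, Matrix.det_one]
    exact (Matrix.isUnit_iff_isUnit_det U).2 (IsUnit.of_mul_eq_one _ hdet)
  have hspec : Θ = U * diagonal lam * star U := by
    have := hH.spectral_theorem
    simpa [Function.comp] using this
  -- trace = sum of eigenvalues
  have htr : Θ.trace = ∑ i, lam i := by
    rw [hspec, Matrix.trace_mul_cycle, hUU', Matrix.one_mul, Matrix.trace_diagonal]
  -- rewrite the target matrix as a conjugated diagonal matrix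
  have hdiag : diagonal (fun i => (1 - ν) * T + ν * lam i)
      = ((1 - ν) * T) • (1 : Matrix (Fin 3) (Fin 3) ℝ) + ν • diagonal lam := by
    ext i j
    rcases eq_or_ne i j with h | h
    · subst h
      simp [Matrix.diagonal_apply_eq, Matrix.one_apply_eq]
    · simp [Matrix.diagonal_apply_ne _ h, Matrix.one_apply_ne h]
  have hkey : U * diagonal (fun i => (1 - ν) * T + ν * lam i) * star U
      = ((1 - ν) * T) • (1 : Matrix (Fin 3) (Fin 3) ℝ) + ν • Θ := by
    simp only [hdiag, Matrix.mul_add, Matrix.add_mul, Matrix.mul_smul, Matrix.smul_mul,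
      Matrix.mul_one, hUU]
    rw [← hspec]
  rw [← hkey]
  refine posDef_mul_mul_conjTranspose_aux ?_ hUunit
  refine Matrix.posDef_diagonal_iff.mpr fun i => ?_
  -- each eigenvalue of the corrected tensor is positive
  have hsum : lam i < ∑ j, lam j := by
    obtain ⟨j, hj⟩ := exists_ne i
    calc lam i < lam i + lam j := by linarith [hev j]
      _ ≤ ∑ k, lam k := by
        have := Finset.add_sum_erase Finset.univ lam (Finset.mem_univ i)
        rw [← this]
        have hjmem : j ∈ Finset.univ.erase i := Finset.mem_erase.mpr ⟨hj, Finset.mem_univ j⟩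
        have := Finset.single_le_sum (f := lam)
          (fun k _ => (hev k).le) hjmem
        linarith
  have hT3 : 3 * T = ∑ j, lam j := by rw [hT, ← htr]; ring
  have hTpos : 0 < T := by
    have : 0 < ∑ j, lam j := Finset.sum_pos (fun j _ => hev j) ⟨i, Finset.mem_univ i⟩
    linarith
  rcases le_or_gt 0 ν with hν0 | hν0
  · have : 0 < (1 - ν) * T := mul_pos (by linarith) hTpos
    nlinarith [mul_nonneg hν0 (hev i).le]
  · -- ν < 0 : use λᵢ < 3T and ν ≥ -1/2
    have h1 : ν * lam i > ν * (3 * T) := by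
      apply (mul_lt_mul_left_of_neg hν0).mpr
      rw [hT3]; exact hsum
    nlinarith
end

section
/- Let d ≥ 1, T > 0, ν ∈ ℝ, ρ > 0, u ∈ ℝ^d, v ∈ ℝ^d, and let Θ₁ be a real symmetric d×d matrix with trace(Θ₁) = 0. Consider the function ε ↦ ρ/√((2π)^d det(T·I + νεΘ₁)) · exp(−½⟨v−u, (T·I + νεΘ₁)⁻¹(v−u)⟩), which is defined for all ε in a neighborhood of 0. Its derivative at ε = 0 equals ν · (M[ρ,u,T](v) / (2T²)) · ⟨v−u, Θ₁(v−u)⟩, where M[ρ,u,T](v) = ρ/(2πT)^{d/2} · exp(−|v−u|²/(2T)) is the Maxwellian. (This identifies the first-order Chapman–Enskog correction g₁ = (𝒢[f] − ℳ[f])/ε of the anisotropic Gaussian.) -/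
open Matrix Real

open Polynomial

attribute [local instance] Matrix.linftyOpNormedAddCommGroup Matrix.linftyOpNormedRing
  Matrix.linftyOpNormedAlgebra

/-- The Maxwellian distribution
`M[ρ,u,T](v) = ρ/(2πT)^(d/2) · exp(−|v−u|²/(2T))`. -/
noncomputable def maxwellian (d : ℕ) (ρ : ℝ) (u : Fin d → ℝ) (T : ℝ)
    (v : Fin d → ℝ) : ℝ :=
  ρ / (2 * π * T) ^ ((d : ℝ) / 2) * Real.exp (-((v - u) ⬝ᵥ (v - u)) / (2 * T))

/-- First-order Chapman–Enskog correction of the anisotropic Gaussian: the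
derivative in `ε` at `ε = 0` of `v ↦ 𝒢[ρ,u,T·I+νεΘ₁](v)` equals
`ν · (M/(2T²)) · ⟨v−u, Θ₁(v−u)⟩`. -/
theorem stmt_10 (d : ℕ) (hd : 1 ≤ d) (ρ T ν : ℝ) (hρ : 0 < ρ) (hT : 0 < T)
    (u v : Fin d → ℝ) (Θ₁ : Matrix (Fin d) (Fin d) ℝ) (hΘ₁ : Θ₁.IsSymm)
    (htr : Θ₁.trace = 0) :
    HasDerivAt
      (fun ε : ℝ =>
        ρ / Real.sqrt ((2 * π) ^ d *
            (T • (1 : Matrix (Fin d) (Fin d) ℝ) + (ν * ε) • Θ₁).det) *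
          Real.exp (-(1/2) * ((v - u) ⬝ᵥ
            (T • (1 : Matrix (Fin d) (Fin d) ℝ) + (ν * ε) • Θ₁)⁻¹ *ᵥ (v - u))))
      (ν * (maxwellian d ρ u T v / (2 * T ^ 2)) * ((v - u) ⬝ᵥ Θ₁ *ᵥ (v - u)))
      0 := by
  haveI : CompleteSpace (Matrix (Fin d) (Fin d) ℝ) := FiniteDimensional.complete ℝ _
  set w : Fin d → ℝ := v - u with hw
  have hinv1 : (T • (1 : Matrix (Fin d) (Fin d) ℝ))⁻¹ = T⁻¹ • 1 := by
    rw [Matrix.inv_eq_right_inv]; simp [smul_smul, hT.ne']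
  -- the matrix-valued curve and its derivative
  have hE : HasDerivAt (fun ε : ℝ => T • (1 : Matrix (Fin d) (Fin d) ℝ) + (ν * ε) • Θ₁)
      (ν • Θ₁) 0 := by
    have h : (fun ε : ℝ => T • (1 : Matrix (Fin d) (Fin d) ℝ) + (ν * ε) • Θ₁)
        = fun ε : ℝ => T • (1 : Matrix (Fin d) (Fin d) ℝ) + ε • (ν • Θ₁) := by
      funext ε; rw [smul_smul, mul_comm]
    rw [h]
    refine (((hasDerivAt_id (0:ℝ)).smul_const (ν • Θ₁)).const_add
      (T • (1 : Matrix (Fin d) (Fin d) ℝ))).congr_deriv ?_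
    simp
  -- derivative of the inverse
  have hMinv : HasDerivAt
      (fun ε : ℝ => (T • (1 : Matrix (Fin d) (Fin d) ℝ) + (ν * ε) • Θ₁)⁻¹)
      ((-(ν * (T⁻¹ * T⁻¹))) • Θ₁) 0 := by
    set x : (Matrix (Fin d) (Fin d) ℝ)ˣ :=
      ⟨T • 1, T⁻¹ • 1, by simp [smul_smul, hT.ne'], by simp [smul_smul, hT.ne']⟩ with hx
    have hg : HasFDerivAt Ring.inverse
        (-(ContinuousLinearMap.mulLeftRight ℝ (Matrix (Fin d) (Fin d) ℝ) (↑x⁻¹) (↑x⁻¹)))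
        ((fun ε : ℝ => T • (1 : Matrix (Fin d) (Fin d) ℝ) + (ν * ε) • Θ₁) 0) := by
      have h0 : (fun ε : ℝ => T • (1 : Matrix (Fin d) (Fin d) ℝ) + (ν * ε) • Θ₁) 0 = ↑x := by
        simp [hx]
      rw [h0]
      exact hasFDerivAt_ringInverse x
    have h := hg.comp_hasDerivAt 0 hE
    simp only [Function.comp_def] at h
    have heq : (fun ε : ℝ => Ring.inverse (T • (1 : Matrix (Fin d) (Fin d) ℝ) + (ν * ε) • Θ₁))
        = fun ε : ℝ => (T • (1 : Matrix (Fin d) (Fin d) ℝ) + (ν * ε) • Θ₁)⁻¹ := by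
      funext ε; rw [Matrix.nonsing_inv_eq_ringInverse]
    rw [heq] at h
    refine h.congr_deriv ?_
    simp [hx, hinv1, smul_smul, smul_mul_assoc, mul_smul_comm]
  -- derivative of the quadratic form
  have hq : HasDerivAt
      (fun ε : ℝ => w ⬝ᵥ (T • (1 : Matrix (Fin d) (Fin d) ℝ) + (ν * ε) • Θ₁)⁻¹ *ᵥ w)
      ((-(ν * (T⁻¹ * T⁻¹))) * (w ⬝ᵥ Θ₁ *ᵥ w)) 0 := by
    let L0 : Matrix (Fin d) (Fin d) ℝ →ₗ[ℝ] ℝ :=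
      { toFun := fun M => w ⬝ᵥ M *ᵥ w
        map_add' := fun M N => by simp [Matrix.add_mulVec, dotProduct_add]
        map_smul' := fun c M => by simp [Matrix.smul_mulVec, dotProduct_smul] }
    let L : Matrix (Fin d) (Fin d) ℝ →L[ℝ] ℝ := L0.toContinuousLinearMap
    have h := L.hasFDerivAt.comp_hasDerivAt 0 hMinv
    simp only [Function.comp_def] at h
    have : L ((-(ν * (T⁻¹ * T⁻¹))) • Θ₁) = (-(ν * (T⁻¹ * T⁻¹))) * (w ⬝ᵥ Θ₁ *ᵥ w) := by
      simp [L, L0, neg_smul, Matrix.neg_mulVec, dotProduct_neg, Matrix.smul_mulVec, dotProduct_smul]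
    exact h.congr_deriv this
  -- derivative of the determinant
  have hD : HasDerivAt
      (fun ε : ℝ => (T • (1 : Matrix (Fin d) (Fin d) ℝ) + (ν * ε) • Θ₁).det) 0 0 := by
    set Q : ℝ[X] := (det (1 + (X : ℝ[X]) • Θ₁.map C)).divX.divX with hQ
    have key : ∀ ε : ℝ, (T • (1 : Matrix (Fin d) (Fin d) ℝ) + (ν * ε) • Θ₁).det
        = T ^ d + T ^ d * (Q.eval (ν / T * ε) * (ν / T * ε) ^ 2) := by
      intro ε
      have h1 : T • (1 : Matrix (Fin d) (Fin d) ℝ) + (ν * ε) • Θ₁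
          = T • (1 + (ν / T * ε) • Θ₁) := by
        rw [smul_add, smul_smul]
        congr 2
        field_simp
      rw [h1, Matrix.det_smul, Matrix.det_one_add_smul, htr]
      simp [Fintype.card_fin]
      ring
    have hi : HasDerivAt (fun ε : ℝ => ν / T * ε) (ν / T) 0 := by
      simpa using (hasDerivAt_id (0:ℝ)).const_mul (ν / T)
    have hpoly : HasDerivAt (fun ε : ℝ => Q.eval (ν / T * ε))
        ((Q.derivative.eval (ν / T * 0)) * (ν / T)) 0 :=
      (Q.hasDerivAt (ν / T * 0)).comp 0 hi
    have hsq : HasDerivAt (fun ε : ℝ => (ν / T * ε) ^ 2) 0 0 := by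
      simpa using hi.fun_pow 2
    have h := ((hpoly.fun_mul hsq).const_mul (T ^ d)).const_add (T ^ d)
    have heq : (fun ε : ℝ => T ^ d + T ^ d * (Q.eval (ν / T * ε) * (ν / T * ε) ^ 2))
        = fun ε : ℝ => (T • (1 : Matrix (Fin d) (Fin d) ℝ) + (ν * ε) • Θ₁).det := by
      funext ε; rw [key ε]
    rw [heq] at h
    simpa using h
  have hD0 : (T • (1 : Matrix (Fin d) (Fin d) ℝ) + ((ν : ℝ) * 0) • Θ₁).det = T ^ d := by
    simp [Matrix.det_smul, Fintype.card_fin]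
  -- positivity facts
  have h2piT : (0:ℝ) < 2 * π * T := by positivity
  have hfpos : (0:ℝ) < (2 * π) ^ d * T ^ d := by positivity
  -- derivative of the prefactor
  have hDc : HasDerivAt
      (fun ε : ℝ => (2 * π) ^ d * (T • (1 : Matrix (Fin d) (Fin d) ℝ) + (ν * ε) • Θ₁).det)
      0 0 := by simpa using hD.const_mul ((2 * π) ^ d)
  have hfne : (2 * π) ^ d * (T • (1 : Matrix (Fin d) (Fin d) ℝ) + ((ν : ℝ) * 0) • Θ₁).det ≠ 0 := by
    rw [hD0]; exact hfpos.ne'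
  have hsqrt := hDc.sqrt hfne
  have hsqrtpos : (0:ℝ) < Real.sqrt
      ((2 * π) ^ d * (T • (1 : Matrix (Fin d) (Fin d) ℝ) + ((ν : ℝ) * 0) • Θ₁).det) := by
    rw [hD0]; exact Real.sqrt_pos.mpr hfpos
  have hpre := (hasDerivAt_const (0:ℝ) ρ).div hsqrt hsqrtpos.ne'
  -- derivative of the exponential
  have hexp := ((hq.const_mul (-(1/2 : ℝ))).exp)
  have hf := hpre.mul hexp
  refine hf.congr_deriv ?_
  simp only [Pi.div_apply]
  -- now the arithmetic of the derivative values
  have hE0 : T • (1 : Matrix (Fin d) (Fin d) ℝ) + ((ν : ℝ) * 0) • Θ₁ = T • 1 := by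
    simp
  rw [hE0] at hD0
  have hsqrt_eq : Real.sqrt ((2 * π) ^ d * (T • (1 : Matrix (Fin d) (Fin d) ℝ)).det)
      = (2 * π * T) ^ ((d : ℝ) / 2) := by
    rw [hD0, ← mul_pow]
    rw [show ((d : ℝ) / 2) = (d : ℝ) * (1/2) by ring]
    rw [Real.rpow_mul h2piT.le, Real.rpow_natCast, ← Real.sqrt_eq_rpow]
  have hq0 : w ⬝ᵥ (T • (1 : Matrix (Fin d) (Fin d) ℝ))⁻¹ *ᵥ w = T⁻¹ * (w ⬝ᵥ w) := by
    simp [hinv1, Matrix.smul_mulVec, dotProduct_smul]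
  rw [hE0, hq0, hsqrt_eq, maxwellian]
  have hexparg : -(1/2 : ℝ) * (T⁻¹ * (w ⬝ᵥ w)) = -(w ⬝ᵥ w) / (2 * T) := by
    field_simp
  rw [hexparg]
  have hrp : (0:ℝ) < (2 * π * T) ^ ((d : ℝ) / 2) := Real.rpow_pos_of_pos h2piT _
  rw [hw]
  field_simp
  ring
end
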